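/- arXiv:1210.0258 — 7 statements merged into one kernel-verified Lean document; each statement's English description precedes it below -/
import Mathlib

section
/- Let f, g : [0, ∞) → [0, ∞) be Lebesgue measurable and locally integrable (integrable on every compact interval), and let N ≥ 0, T > 0, ζ > 0, C ≥ 0 be constants such that f(t + T) ≤ f(t) − ζ g(t) + C for every t ≥ N. Then limsup_{t→∞} (1/t) ∫₀ᵗ g(s) ds ≤ C/ζ. -/
open MeasureTheory Filter

/-- Deterministic time-average bound: if `f (t + T) ≤ f t - ζ g t + C` for `t ≥ N`,
then `limsup (1/t) ∫₀ᵗ g ≤ C / ζ`. -/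
theorem deterministic_time_average_bound
    (f g : ℝ → ℝ)
    (hf_meas : Measurable f) (hg_meas : Measurable g)
    (hf_nonneg : ∀ t, 0 ≤ t → 0 ≤ f t) (hg_nonneg : ∀ t, 0 ≤ t → 0 ≤ g t)
    (hf_loc : ∀ a : ℝ, IntegrableOn f (Set.Icc 0 a))
    (hg_loc : ∀ a : ℝ, IntegrableOn g (Set.Icc 0 a))
    (N T ζ C : ℝ) (hN : 0 ≤ N) (hT : 0 < T) (hζ : 0 < ζ) (hC : 0 ≤ C)
    (hdrift : ∀ t, N ≤ t → f (t + T) ≤ f t - ζ * g t + C) :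
    limsup (fun t : ℝ => (1 / t) * ∫ s in (0:ℝ)..t, g s) atTop ≤ C / ζ := by
  -- interval integrability helpers
  have hIf : ∀ a b : ℝ, 0 ≤ a → a ≤ b → IntervalIntegrable f volume a b := by
    intro a b ha hab
    have h : IntegrableOn f (Set.Icc a b) := (hf_loc b).mono_set (Set.Icc_subset_Icc ha le_rfl)
    rw [← Set.uIcc_of_le hab] at h
    exact h.intervalIntegrable
  have hIg : ∀ a b : ℝ, 0 ≤ a → a ≤ b → IntervalIntegrable g volume a b := by
    intro a b ha hab
    have h : IntegrableOn g (Set.Icc a b) := (hg_loc b).mono_set (Set.Icc_subset_Icc ha le_rfl)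
    rw [← Set.uIcc_of_le hab] at h
    exact h.intervalIntegrable
  have hIfT : ∀ a b : ℝ, 0 ≤ a → a ≤ b → IntervalIntegrable (fun s => f (s + T)) volume a b := by
    intro a b ha hab
    have h := (hIf (a + T) (b + T) (by linarith) (by linarith)).comp_add_right T
    simpa using h
  -- key pointwise-in-x integral bound
  have key : ∀ x : ℝ, N ≤ x →
      ζ * ∫ s in N..x, g s ≤ (∫ s in N..(N+T), f s) + C * (x - N) := by
    intro x hx
    have h1 : ∫ s in N..x, ζ * g s ≤ ∫ s in N..x, (f s - f (s + T) + C) := by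
      apply intervalIntegral.integral_mono_on hx
      · exact (hIg N x hN hx).const_mul ζ
      · exact ((hIf N x hN hx).sub (hIfT N x hN hx)).add intervalIntegrable_const
      · intro s hs
        have := hdrift s hs.1
        linarith
    rw [intervalIntegral.integral_const_mul] at h1
    have h2 : ∫ s in N..x, (f s - f (s + T) + C)
        = (∫ s in N..x, f s) - (∫ s in N..x, f (s + T)) + C * (x - N) := by
      rw [intervalIntegral.integral_add ((hIf N x hN hx).sub (hIfT N x hN hx))
          intervalIntegrable_const,
        intervalIntegral.integral_sub (hIf N x hN hx) (hIfT N x hN hx),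
        intervalIntegral.integral_const]
      simp [smul_eq_mul]; ring
    have h3 : ∫ s in N..x, f (s + T) = ∫ s in (N+T)..(x+T), f s :=
      intervalIntegral.integral_comp_add_right f T
    have h4 : (∫ s in N..x, f s) - (∫ s in (N+T)..(x+T), f s)
        = (∫ s in N..(N+T), f s) - (∫ s in x..(x+T), f s) := by
      have e1 : (∫ s in N..x, f s) + (∫ s in x..(x+T), f s) = ∫ s in N..(x+T), f s :=
        intervalIntegral.integral_add_adjacent_intervals (hIf N x hN hx)
          (hIf x (x+T) (le_trans hN hx) (by linarith))
      have e2 : (∫ s in N..(N+T), f s) + (∫ s in (N+T)..(x+T), f s) = ∫ s in N..(x+T), f s :=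
        intervalIntegral.integral_add_adjacent_intervals (hIf N (N+T) hN (by linarith))
          (hIf (N+T) (x+T) (by linarith) (by linarith))
      linarith
    have h5 : 0 ≤ ∫ s in x..(x+T), f s := by
      apply intervalIntegral.integral_nonneg (by linarith)
      intro u hu
      exact hf_nonneg u (by linarith [hu.1, le_trans hN hx])
    linarith
  set B := ∫ s in N..(N+T), f s with hB
  set A := ∫ s in (0:ℝ)..N, g s with hA
  set K := A + B / ζ with hK
  have ev : ∀ᶠ x in atTop, (1 / x) * ∫ s in (0:ℝ)..x, g s ≤ K / x + C / ζ := by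
    filter_upwards [eventually_ge_atTop (max N 1)] with x hx
    have hxN : N ≤ x := le_trans (le_max_left _ _) hx
    have hx1 : (1:ℝ) ≤ x := le_trans (le_max_right _ _) hx
    have hx0 : (0:ℝ) < x := lt_of_lt_of_le one_pos hx1
    have hsplit : ∫ s in (0:ℝ)..x, g s = A + ∫ s in N..x, g s :=
      (intervalIntegral.integral_add_adjacent_intervals (hIg 0 N le_rfl hN)
        (hIg N x hN hxN)).symm
    have hk := key x hxN
    have htot : ∫ s in (0:ℝ)..x, g s ≤ K + (C / ζ) * x := by
      rw [hsplit, hK]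
      have h6 : ∫ s in N..x, g s ≤ B / ζ + (C / ζ) * (x - N) := by
        rw [show B / ζ + (C / ζ) * (x - N) = (B + C * (x - N)) / ζ by field_simp,
          le_div_iff₀ hζ]
        linarith
      have h7 : (C / ζ) * (x - N) ≤ (C / ζ) * x := by
        apply mul_le_mul_of_nonneg_left (by linarith) (div_nonneg hC hζ.le)
      linarith
    have := mul_le_mul_of_nonneg_left htot (by positivity : (0:ℝ) ≤ 1 / x)
    refine le_trans this (le_of_eq ?_)
    field_simp
  have hR : Tendsto (fun x : ℝ => K / x + C / ζ) atTop (nhds (C / ζ)) := by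
    have h1 : Tendsto (fun x : ℝ => K / x) atTop (nhds 0) :=
      Tendsto.div_atTop tendsto_const_nhds tendsto_id
    simpa using h1.add (tendsto_const_nhds (x := C / ζ) (f := atTop))
  have hle : limsup (fun t : ℝ => (1 / t) * ∫ s in (0:ℝ)..t, g s) atTop
      ≤ limsup (fun x : ℝ => K / x + C / ζ) atTop := by
    refine limsup_le_limsup ev ?_ ?_
    · refine IsBoundedUnder.isCoboundedUnder_le ⟨0, ?_⟩
      rw [eventually_map]
      filter_upwards [eventually_ge_atTop (1:ℝ)] with x hx1
      have hx0 : (0:ℝ) < x := lt_of_lt_of_le one_pos hx1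
      have : 0 ≤ ∫ s in (0:ℝ)..x, g s := by
        apply intervalIntegral.integral_nonneg hx0.le
        intro u hu; exact hg_nonneg u hu.1
      positivity
    · exact hR.isBoundedUnder_le
  rw [hR.limsup_eq] at hle
  exact hle
end

section
/- Let J ≥ 1 be an integer and let B > 0, β_min > 0 and T ≥ 2JB/β_min be real constants. Let v₁, …, v_J be nonnegative reals with ∑_{j=1}^{J} v_j ≥ 2JB, let β₁, …, β_J be reals with β_j ≥ β_min for every j, and let a₁, …, a_J be reals such that for each j: a_j ≤ v_j − β_j T whenever v_j > β_j T, and a_j ≤ B whenever v_j ≤ β_j T. Then ∑_{j=1}^{J} a_j ≤ ∑_{j=1}^{J} v_j − JB. -/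
/-- Deterministic case-analysis lemma for the high-counter drift:
if `∑ v ≥ 2JB`, `β_j ≥ β_min`, `T ≥ 2JB/β_min`, and each `a_j` satisfies
`a_j ≤ v_j − β_j T` when `v_j > β_j T` and `a_j ≤ B` otherwise,
then `∑ a ≤ ∑ v − JB`. -/
theorem high_counter_case_analysis
    (J : ℕ) (hJ : 1 ≤ J) (B βmin T : ℝ)
    (hB : 0 < B) (hβmin : 0 < βmin) (hT : 2 * J * B / βmin ≤ T)
    (v β a : Fin J → ℝ)
    (hv : ∀ j, 0 ≤ v j) (hsum : 2 * J * B ≤ ∑ j, v j)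
    (hβj : ∀ j, βmin ≤ β j)
    (ha1 : ∀ j, β j * T < v j → a j ≤ v j - β j * T)
    (ha2 : ∀ j, v j ≤ β j * T → a j ≤ B) :
    ∑ j, a j ≤ (∑ j, v j) - J * B := by
  have hJB : (0:ℝ) < 2 * J * B := by positivity
  have hT0 : 0 ≤ T := le_trans (le_of_lt (div_pos hJB hβmin)) hT
  have hminT : 2 * J * B ≤ βmin * T := by
    rw [div_le_iff₀ hβmin] at hT
    linarith [hT]
  by_cases h : ∃ j₀, β j₀ * T < v j₀
  · obtain ⟨j₀, hj₀⟩ := h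
    have hβT : βmin * T ≤ β j₀ * T := mul_le_mul_of_nonneg_right (hβj j₀) hT0
    have key : a j₀ ≤ v j₀ - 2 * J * B := by
      have := ha1 j₀ hj₀; linarith
    have hrest : ∀ j, a j ≤ v j + B := by
      intro j
      rcases le_or_gt (v j) (β j * T) with hle | hlt
      · have := ha2 j hle; linarith [hv j]
      · have := ha1 j hlt
        have hβjT : 0 ≤ β j * T :=
          mul_nonneg (le_trans hβmin.le (hβj j)) hT0
        linarith [hB.le]
    have h1 : ∑ j, a j ≤ ∑ j, (if j = j₀ then v j - 2 * J * B else v j + B) := by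
      apply Finset.sum_le_sum
      intro j _
      by_cases hjj : j = j₀
      · simp [hjj, key]
      · simp [hjj, hrest j]
    have h2 : ∑ j, (if j = j₀ then v j - 2 * J * B else v j + B)
        = (∑ j, v j) - 2 * J * B + (J - 1) * B := by
      have : ∀ j, (if j = j₀ then v j - 2 * J * B else v j + B)
          = v j + B + (if j = j₀ then -(2 * J * B) - B else 0) := by
        intro j; by_cases hjj : j = j₀ <;> simp [hjj] <;> ring
      simp only [this, Finset.sum_add_distrib, Finset.sum_ite_eq',
        Finset.mem_univ, if_true, Finset.sum_const, Finset.card_univ,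
        Fintype.card_fin, nsmul_eq_mul]
      ring
    have hJ1 : (1:ℝ) ≤ J := by exact_mod_cast hJ
    calc ∑ j, a j ≤ (∑ j, v j) - 2 * J * B + (J - 1) * B := by rw [← h2]; exact h1
      _ ≤ (∑ j, v j) - J * B := by nlinarith
  · push_neg at h
    have h1 : ∑ j, a j ≤ ∑ j, (B:ℝ) :=
      Finset.sum_le_sum fun j _ => ha2 j (h j)
    have h2 : ∑ _j : Fin J, (B:ℝ) = J * B := by
      simp [Finset.sum_const, nsmul_eq_mul]
    have : ∑ j, a j ≤ J * B := h2 ▸ h1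
    linarith
end

section
/- Consider a stochastic processing network structure satisfying Assumptions A1 and A2. Let w ∈ ℝ_{≥0}^I and let u be a scheduling vector that is maximal with respect to w. If w_i > 0 for some buffer i ∈ I^{(h)}, then for every processor k ∈ K^{(h)} there is exactly one activity j with k_j = k and u_j = 1. -/
/-- In a parallel server network (Assumption A1: each activity uses one processor `kOf j`)
satisfying Assumption A2 (complete bipartite components indexed by `H`), if a scheduling
vector `u` is maximal with respect to `w` and some buffer `i` in component `h` has
`w i > 0`, then every processor `k` of component `h` is used by exactly one active
activity. -/
theorem parallel_server_component_fully_busy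
    {I J K H : Type*} [Fintype I] [Fintype J] [Fintype K] [Fintype H]
    [Nonempty I] [Nonempty J] [Nonempty K]
    [DecidableEq I] [DecidableEq K] [DecidableEq H]
    (buf : J → I) (kOf : J → K) (β : J → ℝ) (hβ : ∀ j, 0 < β j)
    (compI : I → H) (compK : K → H)
    (hIsurj : Function.Surjective compI) (hKsurj : Function.Surjective compK)
    (hcomp : ∀ j, compI (buf j) = compK (kOf j))
    (hbip : ∀ i k, compI i = compK k → ∃ j, buf j = i ∧ kOf j = k)
    (w : I → ℝ) (hw : ∀ i, 0 ≤ w i)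
    (u : J → ℝ) (hu01 : ∀ j, u j = 0 ∨ u j = 1)
    (hcap : ∀ k : K, ∑ j ∈ Finset.univ.filter (fun j => kOf j = k), u j ≤ 1)
    (hmax : ∀ j : J, w (buf j) = 0 ∨
      ∑ ℓ ∈ Finset.univ.filter (fun ℓ => kOf ℓ = kOf j), u ℓ = 1)
    (h : H) (i : I) (hi : compI i = h) (hwi : 0 < w i) :
    ∀ k : K, compK k = h → ∃! j : J, kOf j = k ∧ u j = 1 := by
  classical
  intro k hk
  obtain ⟨j0, hbuf0, hkOf0⟩ := hbip i k (by rw [hi, hk])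
  have hsum : ∑ ℓ ∈ Finset.univ.filter (fun ℓ => kOf ℓ = k), u ℓ = 1 := by
    rcases hmax j0 with h0 | h0
    · rw [hbuf0] at h0; exact absurd h0 (ne_of_gt hwi)
    · rwa [hkOf0] at h0
  -- existence
  have hex : ∃ j, kOf j = k ∧ u j = 1 := by
    by_contra hne
    push_neg at hne
    have : ∑ ℓ ∈ Finset.univ.filter (fun ℓ => kOf ℓ = k), u ℓ = 0 := by
      apply Finset.sum_eq_zero
      intro x hx
      simp only [Finset.mem_filter, Finset.mem_univ, true_and] at hx
      rcases hu01 x with h1 | h1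
      · exact h1
      · exact absurd h1 (hne x hx)
    rw [this] at hsum; norm_num at hsum
  obtain ⟨j1, hj1k, hj1u⟩ := hex
  refine ⟨j1, ⟨hj1k, hj1u⟩, ?_⟩
  rintro j2 ⟨hj2k, hj2u⟩
  by_contra hne
  have hmem1 : j1 ∈ Finset.univ.filter (fun ℓ => kOf ℓ = k) := by simp [hj1k]
  have hmem2 : j2 ∈ Finset.univ.filter (fun ℓ => kOf ℓ = k) := by simp [hj2k]
  have h2le : (2 : ℝ) ≤ ∑ ℓ ∈ Finset.univ.filter (fun ℓ => kOf ℓ = k), u ℓ := by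
    have := Finset.sum_le_sum_of_subset_of_nonneg
      (f := u) (s := ({j2, j1} : Finset J)) (t := Finset.univ.filter (fun ℓ => kOf ℓ = k))
      (by intro x hx; simp only [Finset.mem_insert, Finset.mem_singleton] at hx
          rcases hx with rfl | rfl <;> assumption)
      (fun x _ _ => by rcases hu01 x with h1 | h1 <;> rw [h1] <;> norm_num)
    rw [Finset.sum_pair hne, hj1u, hj2u] at this
    linarith
    -- note: sum over {j2, j1} with j2 ≠ j1
  rw [hsum] at h2le; norm_num at h2le
end

section
/- Consider a stochastic processing network structure satisfying Assumptions A1 and A2. Let w ∈ ℝ_{≥0}^I and let u be a scheduling vector that is maximal with respect to w. Then for every component index h, ∑_{j : i_j ∈ I^{(h)}} u_j β_j ≥ 1⁺(∑_{i ∈ I^{(h)}} w_i) · ∑_{k ∈ K^{(h)}} min{β_j : j ∈ J, k_j = k}, where 1⁺(x) = 1 if x > 0 and 1⁺(x) = 0 otherwise. -/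
/-- Per-component processing-rate guarantee for parallel server networks satisfying
Assumptions A1 and A2: for a schedule `u` maximal with respect to `w`,
`∑_{j : i_j ∈ I^{(h)}} u_j β_j ≥ 1⁺(∑_{i ∈ I^{(h)}} w_i) ∑_{k ∈ K^{(h)}} min{β_j : k_j = k}`. -/
theorem parallel_server_component_rate_lower_bound
    {I J K H : Type*} [Fintype I] [Fintype J] [Fintype K] [Fintype H]
    [Nonempty I] [Nonempty J] [Nonempty K]
    [DecidableEq I] [DecidableEq K] [DecidableEq H]
    (buf : J → I) (kOf : J → K) (β : J → ℝ) (hβ : ∀ j, 0 < β j)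
    (compI : I → H) (compK : K → H)
    (hIsurj : Function.Surjective compI) (hKsurj : Function.Surjective compK)
    (hcomp : ∀ j, compI (buf j) = compK (kOf j))
    (hbip : ∀ i k, compI i = compK k → ∃ j, buf j = i ∧ kOf j = k)
    (w : I → ℝ) (hw : ∀ i, 0 ≤ w i)
    (u : J → ℝ) (hu01 : ∀ j, u j = 0 ∨ u j = 1)
    (hcap : ∀ k : K, ∑ j ∈ Finset.univ.filter (fun j => kOf j = k), u j ≤ 1)
    (hmax : ∀ j : J, w (buf j) = 0 ∨
      ∑ ℓ ∈ Finset.univ.filter (fun ℓ => kOf ℓ = kOf j), u ℓ = 1) :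
    ∀ h : H,
      (if 0 < ∑ i ∈ Finset.univ.filter (fun i => compI i = h), w i then (1:ℝ) else 0) *
        ∑ k ∈ Finset.univ.filter (fun k => compK k = h),
          sInf {x : ℝ | ∃ j, kOf j = k ∧ x = β j}
      ≤ ∑ j ∈ Finset.univ.filter (fun j => compI (buf j) = h), u j * β j := by
  intro h
  have hterm : ∀ j, 0 ≤ u j * β j := by
    intro j
    rcases hu01 j with h0 | h1
    · simp [h0]
    · simp [h1]; exact (hβ j).le
  by_cases hpos : 0 < ∑ i ∈ Finset.univ.filter (fun i => compI i = h), w i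
  · rw [if_pos hpos, one_mul]
    obtain ⟨i0, hi0mem, hi0⟩ : ∃ i ∈ Finset.univ.filter (fun i => compI i = h), 0 < w i := by
      by_contra hc
      push_neg at hc
      have : ∑ i ∈ Finset.univ.filter (fun i => compI i = h), w i ≤ 0 :=
        Finset.sum_nonpos fun i hi => hc i hi
      linarith
    have hi0h : compI i0 = h := (Finset.mem_filter.mp hi0mem).2
    have hbusy : ∀ k, compK k = h →
        ∑ ℓ ∈ Finset.univ.filter (fun ℓ => kOf ℓ = k), u ℓ = 1 := by
      intro k hk
      obtain ⟨j0, hbj0, hkj0⟩ := hbip i0 k (by rw [hi0h, hk])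
      rcases hmax j0 with h0 | h1
      · rw [hbj0] at h0; exact absurd h0 hi0.ne'
      · rwa [hkj0] at h1
    have hk_bound : ∀ k ∈ Finset.univ.filter (fun k => compK k = h),
        sInf {x : ℝ | ∃ j, kOf j = k ∧ x = β j}
          ≤ ∑ j ∈ Finset.univ.filter (fun j => kOf j = k), u j * β j := by
      intro k hk
      have hkh : compK k = h := (Finset.mem_filter.mp hk).2
      have hbdd : BddBelow {x : ℝ | ∃ j, kOf j = k ∧ x = β j} :=
        ⟨0, fun x ⟨j, _, hx⟩ => hx ▸ (hβ j).le⟩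
      calc sInf {x : ℝ | ∃ j, kOf j = k ∧ x = β j}
          = sInf {x : ℝ | ∃ j, kOf j = k ∧ x = β j} *
            ∑ ℓ ∈ Finset.univ.filter (fun ℓ => kOf ℓ = k), u ℓ := by
            rw [hbusy k hkh, mul_one]
        _ = ∑ ℓ ∈ Finset.univ.filter (fun ℓ => kOf ℓ = k),
              sInf {x : ℝ | ∃ j, kOf j = k ∧ x = β j} * u ℓ := by
            rw [Finset.mul_sum]
        _ ≤ ∑ ℓ ∈ Finset.univ.filter (fun ℓ => kOf ℓ = k), u ℓ * β ℓ := by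
            refine Finset.sum_le_sum fun ℓ hℓ => ?_
            rcases hu01 ℓ with h0 | h1
            · simp [h0]
            · rw [h1, mul_one, one_mul]
              exact csInf_le hbdd ⟨ℓ, (Finset.mem_filter.mp hℓ).2, rfl⟩
    have hregroup : ∑ k ∈ Finset.univ.filter (fun k => compK k = h),
        ∑ j ∈ Finset.univ.filter (fun j => kOf j = k), u j * β j
        = ∑ j ∈ Finset.univ.filter (fun j => compI (buf j) = h), u j * β j := by
      rw [← Finset.sum_fiberwise_of_maps_to
        (g := kOf) (t := Finset.univ.filter (fun k => compK k = h))
        (fun j hj => Finset.mem_filter.mpr ⟨Finset.mem_univ _, by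
          have := (Finset.mem_filter.mp hj).2; rw [← hcomp j]; exact this⟩)
        (fun j => u j * β j)]
      refine Finset.sum_congr rfl fun k hk => Finset.sum_congr ?_ fun _ _ => rfl
      have hkh : compK k = h := (Finset.mem_filter.mp hk).2
      ext j
      simp only [Finset.mem_filter, Finset.mem_univ, true_and]
      exact ⟨fun hj => ⟨by rw [hcomp j, hj, hkh], hj⟩, fun hj => hj.2⟩
    rw [← hregroup]
    exact Finset.sum_le_sum hk_bound
  · rw [if_neg hpos, zero_mul]
    exact Finset.sum_nonneg fun j _ => hterm j
end

section
/- Consider a stochastic processing network structure satisfying Assumptions A1 and A2, and define L(x) = ∑_{h=1}^{H} (∑_{i ∈ I^{(h)}} x_i)² for x ∈ ℝ^I. Let ρ ∈ ℝ_{≥0}^I, m ∈ ℝ_{>0}^I and ε ≥ 0, and set ρ^{(h)} = ∑_{i ∈ I^{(h)}} ρ_i, m^{(h)} = ∑_{i ∈ I^{(h)}} m_i, and β̂^{(h)} = ∑_{k ∈ K^{(h)}} min{β_j : j ∈ J, k_j = k}. If ρ^{(h)} + ε m^{(h)} < β̂^{(h)} for every h, then there exist constants η > 0 and C ≥ 0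 such that for every w ∈ ℝ_{≥0}^I and every scheduling vector u maximal with respect to w: L(w + ρ + εm − s(u)) ≤ L(w) − η ∑_{i ∈ I} w_i + C, where s(u) ∈ ℝ^I is given by s_i(u) = ∑_{j : i_j = i} u_j β_j. -/
/-- The quadratic function `L(x) = ∑_h (∑_{i ∈ I^{(h)}} x_i)²` is a local Lyapunov
function with slack `ε` for parallel server networks satisfying Assumptions A1 and A2,
provided `ρ^{(h)} + ε m^{(h)} < β̂^{(h)}` for every component `h`. -/
theorem parallel_server_local_lyapunov
    {I J K H : Type*} [Fintype I] [Fintype J] [Fintype K] [Fintype H]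
    [Nonempty I] [Nonempty J] [Nonempty K]
    [DecidableEq I] [DecidableEq K] [DecidableEq H]
    (buf : J → I) (kOf : J → K) (β : J → ℝ) (hβ : ∀ j, 0 < β j)
    (compI : I → H) (compK : K → H)
    (hIsurj : Function.Surjective compI) (hKsurj : Function.Surjective compK)
    (hcomp : ∀ j, compI (buf j) = compK (kOf j))
    (hbip : ∀ i k, compI i = compK k → ∃ j, buf j = i ∧ kOf j = k)
    (ρ m : I → ℝ) (hρ : ∀ i, 0 ≤ ρ i) (hm : ∀ i, 0 < m i)
    (ε : ℝ) (hε : 0 ≤ ε)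
    (hload : ∀ h : H,
      ∑ i ∈ Finset.univ.filter (fun i => compI i = h), (ρ i + ε * m i)
        < ∑ k ∈ Finset.univ.filter (fun k => compK k = h),
            sInf {x : ℝ | ∃ j, kOf j = k ∧ x = β j}) :
    ∃ η > (0:ℝ), ∃ C ≥ (0:ℝ), ∀ (w : I → ℝ) (u : J → ℝ),
      (∀ i, 0 ≤ w i) →
      (∀ j, u j = 0 ∨ u j = 1) →
      (∀ k : K, ∑ j ∈ Finset.univ.filter (fun j => kOf j = k), u j ≤ 1) →
      (∀ j : J, w (buf j) = 0 ∨
        ∑ ℓ ∈ Finset.univ.filter (fun ℓ => kOf ℓ = kOf j), u ℓ = 1) →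
      ∑ h : H, (∑ i ∈ Finset.univ.filter (fun i => compI i = h),
          (w i + ρ i + ε * m i - ∑ j ∈ Finset.univ.filter (fun j => buf j = i), u j * β j)) ^ 2
        ≤ (∑ h : H, (∑ i ∈ Finset.univ.filter (fun i => compI i = h), w i) ^ 2)
            - η * ∑ i : I, w i + C := by
  classical
  have hHne : Nonempty H := ⟨compI (Classical.arbitrary I)⟩
  -- basic quantities
  set δ : H → ℝ := fun h => ∑ i ∈ Finset.univ.filter (fun i => compI i = h), (ρ i + ε * m i)
    with hδdef
  set bhat : H → ℝ := fun h => ∑ k ∈ Finset.univ.filter (fun k => compK k = h),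
      sInf {x : ℝ | ∃ j, kOf j = k ∧ x = β j} with hbhatdef
  set B : ℝ := ∑ j : J, β j with hBdef
  have hB : 0 ≤ B := Finset.sum_nonneg fun j _ => (hβ j).le
  have hδnn : ∀ h, 0 ≤ δ h := fun h =>
    Finset.sum_nonneg fun i _ => add_nonneg (hρ i) (mul_nonneg hε (hm i).le)
  -- every processor has an activity
  have hkact : ∀ k : K, ∃ j, kOf j = k := by
    intro k
    obtain ⟨i, hi⟩ := hIsurj (compK k)
    obtain ⟨j, _, hj2⟩ := hbip i k hi
    exact ⟨j, hj2⟩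
  have hsetne : ∀ k : K, ({x : ℝ | ∃ j, kOf j = k ∧ x = β j}).Nonempty := by
    intro k; obtain ⟨j, hj⟩ := hkact k; exact ⟨β j, j, hj, rfl⟩
  have hbdd : ∀ k : K, BddBelow {x : ℝ | ∃ j, kOf j = k ∧ x = β j} := by
    intro k; exact ⟨0, fun x ⟨j, _, hx⟩ => hx ▸ (hβ j).le⟩
  have hsInf_le : ∀ j : J, sInf {x : ℝ | ∃ ℓ, kOf ℓ = kOf j ∧ x = β ℓ} ≤ β j := by
    intro j; exact csInf_le (hbdd _) ⟨j, rfl, rfl⟩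
  -- choose η and C
  obtain ⟨h₀⟩ := hHne
  set η : ℝ := Finset.univ.inf' (Finset.univ_nonempty_iff.mpr ⟨h₀⟩) (fun h => 2 * (bhat h - δ h)) with hηdef
  have hηpos : 0 < η := by
    rw [hηdef, Finset.lt_inf'_iff]
    intro h _
    simp only [hbhatdef, hδdef]
    linarith [hload h]
  have hηle : ∀ h : H, η ≤ 2 * (bhat h - δ h) := fun h =>
    Finset.inf'_le _ (Finset.mem_univ h)
  refine ⟨η, hηpos, ∑ h : H, (δ h + B) ^ 2,
    Finset.sum_nonneg fun h _ => sq_nonneg _, ?_⟩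
  intro w u hw hu01 hcap hmax
  have hu0 : ∀ j, 0 ≤ u j := fun j => by rcases hu01 j with h | h <;> simp [h]
  have hu1 : ∀ j, u j ≤ 1 := fun j => by rcases hu01 j with h | h <;> simp [h]
  -- per-component quantities
  set W : H → ℝ := fun h => ∑ i ∈ Finset.univ.filter (fun i => compI i = h), w i with hWdef
  set S : H → ℝ := fun h => ∑ i ∈ Finset.univ.filter (fun i => compI i = h),
      ∑ j ∈ Finset.univ.filter (fun j => buf j = i), u j * β j with hSdef
  have hWnn : ∀ h, 0 ≤ W h := fun h => Finset.sum_nonneg fun i _ => hw i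
  -- S h as a sum over activities in component h
  have hSalt : ∀ h, S h = ∑ j ∈ Finset.univ.filter (fun j => compK (kOf j) = h), u j * β j := by
    intro h
    simp only [hSdef]
    rw [Finset.sum_fiberwise_eq_sum_filter Finset.univ
      (Finset.univ.filter (fun i => compI i = h)) buf (fun j => u j * β j)]
    apply Finset.sum_congr
    · ext j; simp [hcomp j]
    · intros; rfl
  -- S h is nonneg and at most B
  have hSnn : ∀ h, 0 ≤ S h := fun h =>
    Finset.sum_nonneg fun i _ => Finset.sum_nonneg fun j _ =>
      mul_nonneg (hu0 j) (hβ j).le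
  have hSB : ∀ h, S h ≤ B := by
    intro h
    rw [hSalt h, hBdef]
    calc ∑ j ∈ Finset.univ.filter (fun j => compK (kOf j) = h), u j * β j
        ≤ ∑ j ∈ Finset.univ.filter (fun j => compK (kOf j) = h), β j :=
          Finset.sum_le_sum fun j _ => by nlinarith [hu1 j, hβ j, hu0 j]
      _ ≤ ∑ j : J, β j :=
          Finset.sum_le_sum_of_subset_of_nonneg (Finset.filter_subset _ _)
            (fun j _ _ => (hβ j).le)
  -- key: if W h > 0 then S h ≥ bhat h
  have hkey : ∀ h, 0 < W h → bhat h ≤ S h := by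
    intro h hWh
    -- some buffer has positive content
    have : ∃ i ∈ Finset.univ.filter (fun i => compI i = h), 0 < w i := by
      by_contra hcon
      push_neg at hcon
      have : W h ≤ 0 := Finset.sum_nonpos fun i hi => hcon i hi
      linarith
    obtain ⟨i₀, hi₀mem, hi₀pos⟩ := this
    have hi₀comp : compI i₀ = h := (Finset.mem_filter.mp hi₀mem).2
    -- every processor in component h is saturated
    have hsat : ∀ k : K, compK k = h →
        ∑ ℓ ∈ Finset.univ.filter (fun ℓ => kOf ℓ = k), u ℓ = 1 := by
      intro k hk
      obtain ⟨j, hj1, hj2⟩ := hbip i₀ k (by rw [hi₀comp, hk])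
      rcases hmax j with hz | hs
      · rw [hj1] at hz; exact absurd hz (ne_of_gt hi₀pos)
      · rwa [hj2] at hs
    rw [hSalt h]
    simp only [hbhatdef]
    -- regroup by processor
    have hgrp : ∑ j ∈ Finset.univ.filter (fun j => compK (kOf j) = h), u j * β j
        = ∑ k ∈ Finset.univ.filter (fun k => compK k = h),
            ∑ j ∈ Finset.univ.filter (fun j => kOf j = k), u j * β j := by
      rw [Finset.sum_fiberwise_eq_sum_filter Finset.univ
        (Finset.univ.filter (fun k => compK k = h)) kOf (fun j => u j * β j)]
      apply Finset.sum_congr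
      · ext j; simp
      · intros; rfl
    rw [hgrp]
    apply Finset.sum_le_sum
    intro k hk
    have hk' : compK k = h := (Finset.mem_filter.mp hk).2
    calc sInf {x : ℝ | ∃ j, kOf j = k ∧ x = β j}
        = sInf {x : ℝ | ∃ j, kOf j = k ∧ x = β j}
            * ∑ ℓ ∈ Finset.univ.filter (fun ℓ => kOf ℓ = k), u ℓ := by
          rw [hsat k hk', mul_one]
      _ = ∑ ℓ ∈ Finset.univ.filter (fun ℓ => kOf ℓ = k),
            sInf {x : ℝ | ∃ j, kOf j = k ∧ x = β j} * u ℓ := by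
          rw [Finset.mul_sum]
      _ ≤ ∑ ℓ ∈ Finset.univ.filter (fun ℓ => kOf ℓ = k), u ℓ * β ℓ := by
          apply Finset.sum_le_sum
          intro ℓ hℓ
          have hℓ' : kOf ℓ = k := (Finset.mem_filter.mp hℓ).2
          have h1 : sInf {x : ℝ | ∃ j, kOf j = k ∧ x = β j} ≤ β ℓ :=
            csInf_le (hbdd k) ⟨ℓ, hℓ', rfl⟩
          nlinarith [hu0 ℓ]
  -- inner sum identity
  have hinner : ∀ h : H,
      ∑ i ∈ Finset.univ.filter (fun i => compI i = h),
        (w i + ρ i + ε * m i - ∑ j ∈ Finset.univ.filter (fun j => buf j = i), u j * β j)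
      = W h + δ h - S h := by
    intro h
    simp only [hWdef, hδdef, hSdef]
    rw [← Finset.sum_add_distrib, ← Finset.sum_sub_distrib]
    apply Finset.sum_congr rfl
    intro i _
    ring
  -- per-component estimate and conclusion
  have hperh : ∀ h : H, (W h + δ h - S h) ^ 2 ≤ W h ^ 2 - η * W h + (δ h + B) ^ 2 := by
    intro h
    have hd2 : (δ h - S h) ^ 2 ≤ (δ h + B) ^ 2 := by
      have h1 : δ h - S h ≤ δ h + B := by linarith [hSnn h, hB]
      have h2 : -(δ h + B) ≤ δ h - S h := by linarith [hSB h, hδnn h]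
      nlinarith
    have hcross : 2 * (δ h - S h) * W h ≤ -(η * W h) := by
      rcases eq_or_lt_of_le (hWnn h) with heq | hpos
      · rw [← heq]; simp
      · have h1 := hkey h hpos
        have h2 := hηle h
        nlinarith
    nlinarith [hd2, hcross]
  calc ∑ h : H, (∑ i ∈ Finset.univ.filter (fun i => compI i = h),
          (w i + ρ i + ε * m i - ∑ j ∈ Finset.univ.filter (fun j => buf j = i), u j * β j)) ^ 2
      = ∑ h : H, (W h + δ h - S h) ^ 2 := by
        apply Finset.sum_congr rfl; intro h _; rw [hinner h]
    _ ≤ ∑ h : H, (W h ^ 2 - η * W h + (δ h + B) ^ 2) :=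
        Finset.sum_le_sum fun h _ => hperh h
    _ = (∑ h : H, W h ^ 2) - η * (∑ h : H, W h) + ∑ h : H, (δ h + B) ^ 2 := by
        rw [Finset.sum_add_distrib, Finset.sum_sub_distrib, Finset.mul_sum]
    _ = (∑ h : H, (∑ i ∈ Finset.univ.filter (fun i => compI i = h), w i) ^ 2)
          - η * ∑ i : I, w i + ∑ h : H, (δ h + B) ^ 2 := by
        simp only [hWdef]
        rw [Finset.sum_fiberwise Finset.univ compI w]
end

section
/- Consider a stochastic processing network structure satisfying Assumption B1 with unit service rates (β_{j_i} = 1 for all i ∈ I), and define L(x) = ∑_{i ∈ I} ∑_{k ∈ K_i} ∑_{ℓ ∈ I : k ∈ K_ℓ} x_i x_ℓ for x ∈ ℝ^I. Let ρ ∈ ℝ_{≥0}^I, m ∈ ℝ_{>0}^I and ε ≥ 0, set ν_i = ρ_i + ε m_i and ν^{(k)} = ∑_{i ∈ I : k ∈ K_i} ν_i. If ν^{(k)} < 1/(max_{i ∈ I} |K_i|) for every processor k ∈ K, then there exist constants η > 0 and C ≥ 0 such that for every w ∈ ℝ_{≥0}^I and every scheduling vector u maximal with respect to w: L(w + ρ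 + εm − s(u)) ≤ L(w) − η ∑_{i ∈ I} w_i + C, where s(u) ∈ ℝ^I is given by s_i(u) = u_{j_i}. -/
private lemma triple_eq' {I K : Type*} [Fintype I] [Fintype K] [DecidableEq K]
    (A : I → Finset K) (f : I → I → ℝ) :
    ∑ i, ∑ k ∈ A i, ∑ ℓ ∈ Finset.univ.filter (fun ℓ : I => k ∈ A ℓ), f i ℓ
      = ∑ i, ∑ ℓ, ((A i ∩ A ℓ).card : ℝ) * f i ℓ := by
  refine Finset.sum_congr rfl fun i _ => ?_
  calc ∑ k ∈ A i, ∑ ℓ ∈ Finset.univ.filter (fun ℓ : I => k ∈ A ℓ), f i ℓ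
      = ∑ k ∈ A i, ∑ ℓ, if k ∈ A ℓ then f i ℓ else 0 := by
        simp [Finset.sum_filter]
    _ = ∑ ℓ, ∑ k ∈ A i, if k ∈ A ℓ then f i ℓ else 0 := Finset.sum_comm
    _ = ∑ ℓ, ((A i ∩ A ℓ).card : ℝ) * f i ℓ := by
        refine Finset.sum_congr rfl fun ℓ _ => ?_
        rw [← Finset.sum_filter, Finset.sum_const, nsmul_eq_mul,
          Finset.filter_mem_eq_inter]

/-- The quadratic function `L(x) = ∑_i ∑_{k ∈ K_i} ∑_{ℓ : k ∈ K_ℓ} x_i x_ℓ` is a local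
Lyapunov function with slack `ε` for synchronized communication networks satisfying
Assumption B1 with unit rates, provided `ν^{(k)} < 1 / max_i |K_i|` for all processors. -/
theorem communication_network_local_lyapunov
    {I J K : Type*} [Fintype I] [Fintype J] [Fintype K]
    [Nonempty I] [Nonempty J] [Nonempty K]
    [DecidableEq I] [DecidableEq J] [DecidableEq K]
    (buf : J → I) (procs : J → Finset K) (hprocs : ∀ j, (procs j).Nonempty)
    (β : J → ℝ) (hβ : ∀ j, 0 < β j)
    (jOf : I → J) (hB1a : ∀ i, buf (jOf i) = i) (hB1b : ∀ j, jOf (buf j) = j)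
    (hunit : ∀ i : I, β (jOf i) = 1)
    (ρ m : I → ℝ) (hρ : ∀ i, 0 ≤ ρ i) (hm : ∀ i, 0 < m i)
    (ε : ℝ) (hε : 0 ≤ ε)
    (hload : ∀ k : K,
      ∑ i ∈ Finset.univ.filter (fun i : I => k ∈ procs (jOf i)), (ρ i + ε * m i)
        < 1 / ((Finset.univ.sup fun i : I => (procs (jOf i)).card : ℕ) : ℝ)) :
    ∃ η > (0:ℝ), ∃ C ≥ (0:ℝ), ∀ (w : I → ℝ) (u : J → ℝ),
      (∀ i, 0 ≤ w i) →
      (∀ j, u j = 0 ∨ u j = 1) →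
      (∀ k : K, ∑ j ∈ Finset.univ.filter (fun j => k ∈ procs j), u j ≤ 1) →
      (∀ j : J, w (buf j) = 0 ∨ ∃ k ∈ procs j,
        ∑ ℓ ∈ Finset.univ.filter (fun ℓ => k ∈ procs ℓ), u ℓ = 1) →
      ∑ i : I, ∑ k ∈ procs (jOf i),
          ∑ ℓ ∈ Finset.univ.filter (fun ℓ : I => k ∈ procs (jOf ℓ)),
            (w i + ρ i + ε * m i - u (jOf i)) * (w ℓ + ρ ℓ + ε * m ℓ - u (jOf ℓ))
        ≤ (∑ i : I, ∑ k ∈ procs (jOf i),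
            ∑ ℓ ∈ Finset.univ.filter (fun ℓ : I => k ∈ procs (jOf ℓ)), w i * w ℓ)
            - η * ∑ i : I, w i + C := by
  classical
  -- notation
  set M : ℕ := Finset.univ.sup fun i : I => (procs (jOf i)).card with hM_def
  have hM1 : 1 ≤ M := by
    obtain ⟨i⟩ := (inferInstance : Nonempty I)
    rw [hM_def]
    exact le_trans (hprocs (jOf i)).card_pos
      (Finset.le_sup (f := fun i : I => (procs (jOf i)).card) (Finset.mem_univ i))
  have hMR : (0:ℝ) < (M : ℝ) := by exact_mod_cast hM1
  have hν0 : ∀ i : I, 0 ≤ ρ i + ε * m i :=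
    fun i => add_nonneg (hρ i) (mul_nonneg hε (hm i).le)
  have hK : (Finset.univ : Finset K).Nonempty := Finset.univ_nonempty
  set νk : K → ℝ :=
    fun k => ∑ i ∈ Finset.univ.filter (fun i : I => k ∈ procs (jOf i)), (ρ i + ε * m i)
    with hνk_def
  have hνk0 : ∀ k, 0 ≤ νk k := fun k => Finset.sum_nonneg fun i _ => hν0 i
  set V : ℝ := Finset.univ.sup' hK νk with hV_def
  have hVk : ∀ k, νk k ≤ V := fun k => Finset.le_sup' νk (Finset.mem_univ k)
  have hV0 : 0 ≤ V := by
    obtain ⟨k⟩ := (inferInstance : Nonempty K)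
    exact le_trans (hνk0 k) (hVk k)
  have hVlt : V < 1 / (M : ℝ) := by
    rw [hV_def]
    exact (Finset.sup'_lt_iff hK).mpr fun k _ => hload k
  have hMV : (M : ℝ) * V < 1 := by
    rw [lt_div_iff₀ hMR] at hVlt
    nlinarith
  refine ⟨2 * (1 - (M : ℝ) * V), by linarith, ?_⟩
  refine ⟨∑ i : I, ∑ k ∈ procs (jOf i),
      ∑ ℓ ∈ Finset.univ.filter (fun ℓ : I => k ∈ procs (jOf ℓ)),
        (ρ i + ε * m i + 1) * (ρ ℓ + ε * m ℓ + 1),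
    Finset.sum_nonneg fun i _ => Finset.sum_nonneg fun k _ => Finset.sum_nonneg
      fun ℓ _ => mul_nonneg (by linarith [hν0 i]) (by linarith [hν0 ℓ]), ?_⟩
  intro w u hw hu hcap hmax
  set d : I → ℝ := fun i => ρ i + ε * m i - u (jOf i) with hd_def
  have hu0 : ∀ j, 0 ≤ u j := fun j => by rcases hu j with h | h <;> simp [h]
  have hu1 : ∀ j, u j ≤ 1 := fun j => by rcases hu j with h | h <;> simp [h]
  -- rewrite the left side
  have hgoal_eq : ∑ i : I, ∑ k ∈ procs (jOf i),
      ∑ ℓ ∈ Finset.univ.filter (fun ℓ : I => k ∈ procs (jOf ℓ)),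
        (w i + ρ i + ε * m i - u (jOf i)) * (w ℓ + ρ ℓ + ε * m ℓ - u (jOf ℓ))
      = ∑ i : I, ∑ k ∈ procs (jOf i),
          ∑ ℓ ∈ Finset.univ.filter (fun ℓ : I => k ∈ procs (jOf ℓ)),
            (w i + d i) * (w ℓ + d ℓ) := by
    refine Finset.sum_congr rfl fun i _ => Finset.sum_congr rfl fun k _ =>
      Finset.sum_congr rfl fun ℓ _ => ?_
    simp only [hd_def]; ring
  rw [hgoal_eq]
  -- expansion of the quadratic form
  have hexpand : ∑ i : I, ∑ k ∈ procs (jOf i),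
      ∑ ℓ ∈ Finset.univ.filter (fun ℓ : I => k ∈ procs (jOf ℓ)),
        (w i + d i) * (w ℓ + d ℓ)
      = (∑ i : I, ∑ k ∈ procs (jOf i),
          ∑ ℓ ∈ Finset.univ.filter (fun ℓ : I => k ∈ procs (jOf ℓ)), w i * w ℓ)
      + (∑ i : I, ∑ k ∈ procs (jOf i),
          ∑ ℓ ∈ Finset.univ.filter (fun ℓ : I => k ∈ procs (jOf ℓ)), w i * d ℓ)
      + (∑ i : I, ∑ k ∈ procs (jOf i),
          ∑ ℓ ∈ Finset.univ.filter (fun ℓ : I => k ∈ procs (jOf ℓ)), d i * w ℓ)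
      + (∑ i : I, ∑ k ∈ procs (jOf i),
          ∑ ℓ ∈ Finset.univ.filter (fun ℓ : I => k ∈ procs (jOf ℓ)), d i * d ℓ) := by
    simp only [← Finset.sum_add_distrib]
    refine Finset.sum_congr rfl fun i _ => Finset.sum_congr rfl fun k _ =>
      Finset.sum_congr rfl fun ℓ _ => ?_
    ring
  -- symmetry of the cross terms
  have hsym : ∑ i : I, ∑ k ∈ procs (jOf i),
      ∑ ℓ ∈ Finset.univ.filter (fun ℓ : I => k ∈ procs (jOf ℓ)), d i * w ℓ
      = ∑ i : I, ∑ k ∈ procs (jOf i),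
          ∑ ℓ ∈ Finset.univ.filter (fun ℓ : I => k ∈ procs (jOf ℓ)), w i * d ℓ := by
    rw [triple_eq' (fun i => procs (jOf i)) (fun i ℓ => d i * w ℓ),
      triple_eq' (fun i => procs (jOf i)) (fun i ℓ => w i * d ℓ), Finset.sum_comm]
    refine Finset.sum_congr rfl fun a _ => Finset.sum_congr rfl fun b _ => ?_
    rw [Finset.inter_comm]; ring
  -- bound on the cross term
  have hcross : ∑ i : I, ∑ k ∈ procs (jOf i),
      ∑ ℓ ∈ Finset.univ.filter (fun ℓ : I => k ∈ procs (jOf ℓ)), w i * d ℓ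
      ≤ ((M : ℝ) * V - 1) * ∑ i : I, w i := by
    have h1 : ∑ i : I, ∑ k ∈ procs (jOf i),
        ∑ ℓ ∈ Finset.univ.filter (fun ℓ : I => k ∈ procs (jOf ℓ)), w i * d ℓ
        = ∑ i : I, w i * ∑ k ∈ procs (jOf i),
            ∑ ℓ ∈ Finset.univ.filter (fun ℓ : I => k ∈ procs (jOf ℓ)), d ℓ := by
      refine Finset.sum_congr rfl fun i _ => ?_
      rw [Finset.mul_sum]
      exact Finset.sum_congr rfl fun k _ => (Finset.mul_sum _ _ _).symm
    rw [h1]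
    have h2 : ∀ i : I, w i * (∑ k ∈ procs (jOf i),
        ∑ ℓ ∈ Finset.univ.filter (fun ℓ : I => k ∈ procs (jOf ℓ)), d ℓ)
        ≤ w i * ((M : ℝ) * V - 1) := by
      intro i
      rcases hmax (jOf i) with h0 | ⟨k₀, hk₀, hfull⟩
      · rw [hB1a] at h0; simp [h0]
      · refine mul_le_mul_of_nonneg_left ?_ (hw i)
        -- rewrite inner sums
        have hin : ∀ k : K,
            ∑ ℓ ∈ Finset.univ.filter (fun ℓ : I => k ∈ procs (jOf ℓ)), d ℓ
            = νk k - ∑ ℓ ∈ Finset.univ.filter (fun ℓ : I => k ∈ procs (jOf ℓ)),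
                u (jOf ℓ) := by
          intro k
          rw [hνk_def, ← Finset.sum_sub_distrib]
        -- full processor, reindexed to buffers
        have hfull' : ∑ ℓ ∈ Finset.univ.filter (fun ℓ : I => k₀ ∈ procs (jOf ℓ)),
            u (jOf ℓ) = 1 := by
          rw [← hfull]
          simp only [Finset.sum_filter]
          exact Equiv.sum_comp ⟨jOf, buf, hB1a, hB1b⟩
            (fun j => if k₀ ∈ procs j then u j else 0)
        have huk0 : ∀ k : K, 0 ≤ ∑ ℓ ∈ Finset.univ.filter
            (fun ℓ : I => k ∈ procs (jOf ℓ)), u (jOf ℓ) :=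
          fun k => Finset.sum_nonneg fun ℓ _ => hu0 (jOf ℓ)
        calc ∑ k ∈ procs (jOf i),
              ∑ ℓ ∈ Finset.univ.filter (fun ℓ : I => k ∈ procs (jOf ℓ)), d ℓ
            = ∑ k ∈ procs (jOf i), (νk k
                - ∑ ℓ ∈ Finset.univ.filter (fun ℓ : I => k ∈ procs (jOf ℓ)),
                    u (jOf ℓ)) := Finset.sum_congr rfl fun k _ => hin k
          _ = (∑ k ∈ procs (jOf i), νk k)
                - ∑ k ∈ procs (jOf i),
                    ∑ ℓ ∈ Finset.univ.filter (fun ℓ : I => k ∈ procs (jOf ℓ)),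
                      u (jOf ℓ) := Finset.sum_sub_distrib _ _
          _ ≤ ((procs (jOf i)).card : ℝ) * V - 1 := by
              refine sub_le_sub ?_ ?_
              · have := Finset.sum_le_card_nsmul (procs (jOf i)) νk V
                  (fun k _ => hVk k)
                rwa [nsmul_eq_mul] at this
              · calc (1:ℝ) = ∑ ℓ ∈ Finset.univ.filter
                      (fun ℓ : I => k₀ ∈ procs (jOf ℓ)), u (jOf ℓ) := hfull'.symm
                  _ ≤ ∑ k ∈ procs (jOf i),
                      ∑ ℓ ∈ Finset.univ.filter (fun ℓ : I => k ∈ procs (jOf ℓ)),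
                        u (jOf ℓ) :=
                    Finset.single_le_sum (fun k _ => huk0 k) hk₀
          _ ≤ (M : ℝ) * V - 1 := by
              have hcard : ((procs (jOf i)).card : ℝ) ≤ (M : ℝ) := by
                exact_mod_cast Finset.le_sup (f := fun i : I => (procs (jOf i)).card)
                  (Finset.mem_univ i)
              nlinarith
    calc ∑ i : I, w i * ∑ k ∈ procs (jOf i),
          ∑ ℓ ∈ Finset.univ.filter (fun ℓ : I => k ∈ procs (jOf ℓ)), d ℓ
        ≤ ∑ i : I, w i * ((M : ℝ) * V - 1) :=
          Finset.sum_le_sum fun i _ => h2 i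
      _ = ((M : ℝ) * V - 1) * ∑ i : I, w i := by
          rw [← Finset.sum_mul, mul_comm]
  -- bound on the quadratic error term
  have hquad : ∑ i : I, ∑ k ∈ procs (jOf i),
      ∑ ℓ ∈ Finset.univ.filter (fun ℓ : I => k ∈ procs (jOf ℓ)), d i * d ℓ
      ≤ ∑ i : I, ∑ k ∈ procs (jOf i),
          ∑ ℓ ∈ Finset.univ.filter (fun ℓ : I => k ∈ procs (jOf ℓ)),
            (ρ i + ε * m i + 1) * (ρ ℓ + ε * m ℓ + 1) := by
    have habs : ∀ a : I, |d a| ≤ ρ a + ε * m a + 1 := by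
      intro a
      rw [hd_def, abs_le]
      constructor
      · have := hu1 (jOf a); have := hν0 a; simp only; linarith
      · have := hu0 (jOf a); simp only; linarith
    refine Finset.sum_le_sum fun i _ => Finset.sum_le_sum fun k _ =>
      Finset.sum_le_sum fun ℓ _ => ?_
    calc d i * d ℓ ≤ |d i * d ℓ| := le_abs_self _
      _ = |d i| * |d ℓ| := abs_mul _ _
      _ ≤ (ρ i + ε * m i + 1) * (ρ ℓ + ε * m ℓ + 1) :=
          mul_le_mul (habs i) (habs ℓ) (abs_nonneg _)
            (by linarith [hν0 i])
  rw [hexpand, hsym]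
  nlinarith [hcross, hquad]
end

section
/- Let m₁, m₂, m₃, m₄ > 0 satisfy m₁ + m₄ < 1 and m₂ + m₃ < 1, and let 0 ≤ ε < min((1 − m₁ − m₄)/(m₁ + m₄), (1 − m₂ − m₃)/(m₂ + m₃)). Define L : ℝ⁴ → ℝ by L(x) = (x₁ + x₄)² + (x₂ + x₃)². Call a pair (w, u) with w ∈ ℝ_{≥0}⁴ and u ∈ {0,1}⁴ Rybko–Stolyar-maximal if u₁ + u₄ ≤ 1, u₂ + u₃ ≤ 1, u₁ + u₄ = 1 whenever w₁ > 0 or w₄ > 0, and u₂ + u₃ = 1 whenever w₂ > 0 or w₃ > 0. Then there exist constants η > 0 and C ≥ 0 such that for every Rybko–Stolyar-maximal pair (w, u): L(w + (1 + ε)m − u) ≤ L(w) − η(w₁ + w₂ + w₃ + w₄) + C, where m = (m₁, m₂, m₃, m₄) and u is regarded as a vector in ℝ⁴. -/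
lemma rs_one_pair (A ρ s : ℝ) (hA : 0 ≤ A) (hρ0 : 0 < ρ) (hρ1 : ρ < 1)
    (hs0 : 0 ≤ s) (hs1 : s ≤ 1) (hmax : 0 < A → s = 1) :
    (A + ρ - s) ^ 2 ≤ A ^ 2 - 2 * (1 - ρ) * A + 1 := by
  rcases eq_or_lt_of_le hA with h | h
  · nlinarith [sq_nonneg (ρ - s)]
  · have hs := hmax h
    nlinarith [sq_nonneg (1 - ρ)]

/-- Local Lyapunov function for the Rybko–Stolyar network:
`L(x) = (x₁ + x₄)² + (x₂ + x₃)²` satisfies the local Lyapunov drift condition with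
slack `ε` under the stability conditions `m₁ + m₄ < 1` and `m₂ + m₃ < 1`.
(Buffers are indexed `0,1,2,3` instead of `1,2,3,4`.) -/
theorem rybko_stolyar_local_lyapunov
    (m : Fin 4 → ℝ) (hm : ∀ i, 0 < m i)
    (h14 : m 0 + m 3 < 1) (h23 : m 1 + m 2 < 1)
    (ε : ℝ) (hε0 : 0 ≤ ε)
    (hε : ε < min ((1 - m 0 - m 3) / (m 0 + m 3)) ((1 - m 1 - m 2) / (m 1 + m 2))) :
    ∃ η > (0:ℝ), ∃ C ≥ (0:ℝ), ∀ w u : Fin 4 → ℝ,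
      (∀ i, 0 ≤ w i) → (∀ i, u i = 0 ∨ u i = 1) →
      u 0 + u 3 ≤ 1 → u 1 + u 2 ≤ 1 →
      ((0 < w 0 ∨ 0 < w 3) → u 0 + u 3 = 1) →
      ((0 < w 1 ∨ 0 < w 2) → u 1 + u 2 = 1) →
      ((w 0 + (1 + ε) * m 0 - u 0) + (w 3 + (1 + ε) * m 3 - u 3)) ^ 2
        + ((w 1 + (1 + ε) * m 1 - u 1) + (w 2 + (1 + ε) * m 2 - u 2)) ^ 2
      ≤ (w 0 + w 3) ^ 2 + (w 1 + w 2) ^ 2 - η * (w 0 + w 1 + w 2 + w 3) + C := by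
  set ρ1 := (1 + ε) * (m 0 + m 3) with hρ1def
  set ρ2 := (1 + ε) * (m 1 + m 2) with hρ2def
  have hm0 := hm 0; have hm1 := hm 1; have hm2 := hm 2; have hm3 := hm 3
  have hε1 : ε < (1 - m 0 - m 3) / (m 0 + m 3) := lt_of_lt_of_le hε (min_le_left _ _)
  have hε2 : ε < (1 - m 1 - m 2) / (m 1 + m 2) := lt_of_lt_of_le hε (min_le_right _ _)
  have hρ1lt : ρ1 < 1 := by
    have := (lt_div_iff₀ (by linarith : (0:ℝ) < m 0 + m 3)).mp hε1
    nlinarith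
  have hρ2lt : ρ2 < 1 := by
    have := (lt_div_iff₀ (by linarith : (0:ℝ) < m 1 + m 2)).mp hε2
    nlinarith
  have hρ1pos : 0 < ρ1 := by positivity
  have hρ2pos : 0 < ρ2 := by positivity
  refine ⟨2 * min (1 - ρ1) (1 - ρ2), by
    have : 0 < min (1 - ρ1) (1 - ρ2) := lt_min (by linarith) (by linarith)
    linarith, 2, by norm_num, ?_⟩
  intro w u hw hu hu14 hu23 hmax1 hmax2
  have hu0 : 0 ≤ u 0 := by rcases hu 0 with h | h <;> simp [h]
  have hu1' : 0 ≤ u 1 := by rcases hu 1 with h | h <;> simp [h]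
  have hu2' : 0 ≤ u 2 := by rcases hu 2 with h | h <;> simp [h]
  have hu3 : 0 ≤ u 3 := by rcases hu 3 with h | h <;> simp [h]
  have key1 : ((w 0 + w 3) + ρ1 - (u 0 + u 3)) ^ 2
      ≤ (w 0 + w 3) ^ 2 - 2 * (1 - ρ1) * (w 0 + w 3) + 1 := by
    refine rs_one_pair _ _ _ (by linarith [hw 0, hw 3]) hρ1pos hρ1lt (by linarith)
      hu14 ?_
    intro h
    apply hmax1
    by_contra hc
    push_neg at hc
    have h0 : w 0 = 0 := le_antisymm hc.1 (hw 0)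
    have h3 : w 3 = 0 := le_antisymm hc.2 (hw 3)
    rw [h0, h3] at h; linarith
  have key2 : ((w 1 + w 2) + ρ2 - (u 1 + u 2)) ^ 2
      ≤ (w 1 + w 2) ^ 2 - 2 * (1 - ρ2) * (w 1 + w 2) + 1 := by
    refine rs_one_pair _ _ _ (by linarith [hw 1, hw 2]) hρ2pos hρ2lt (by linarith)
      hu23 ?_
    intro h
    apply hmax2
    by_contra hc
    push_neg at hc
    have h1 : w 1 = 0 := le_antisymm hc.1 (hw 1)
    have h2 : w 2 = 0 := le_antisymm hc.2 (hw 2)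
    rw [h1, h2] at h; linarith
  have hmin1 : min (1 - ρ1) (1 - ρ2) ≤ 1 - ρ1 := min_le_left _ _
  have hmin2 : min (1 - ρ1) (1 - ρ2) ≤ 1 - ρ2 := min_le_right _ _
  have e1 : (w 0 + (1 + ε) * m 0 - u 0) + (w 3 + (1 + ε) * m 3 - u 3)
      = (w 0 + w 3) + ρ1 - (u 0 + u 3) := by rw [hρ1def]; ring
  have e2 : (w 1 + (1 + ε) * m 1 - u 1) + (w 2 + (1 + ε) * m 2 - u 2)
      = (w 1 + w 2) + ρ2 - (u 1 + u 2) := by rw [hρ2def]; ring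
  rw [e1, e2]
  nlinarith [hw 0, hw 1, hw 2, hw 3,
    mul_le_mul_of_nonneg_right hmin1 (by linarith [hw 0, hw 3] : (0:ℝ) ≤ w 0 + w 3),
    mul_le_mul_of_nonneg_right hmin2 (by linarith [hw 1, hw 2] : (0:ℝ) ≤ w 1 + w 2)]
end
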